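/- Let N_u ≤ N_RF ≤ N_r, let λ > 0, and let H ∈ ℂ^{N_r×N_u} satisfy H^H H = λ·I_{N_u}. Let W₁ ∈ ℂ^{N_r×N_RF} have orthonormal columns such that its first N_u columns form an orthonormal basis of the column space of H, and let W₂ ∈ ℂ^{N_RF×N_RF} be any unitary matrix all of whose entries have modulus 1/√N_RF. Then C(W₁W₂) = N_u · log₂( 1 + αλN_RF / (λ N_u (1−α) + N_RF/ρ) ). -/

import Mathlib

open Matrix BigOperators Filter Topology

/-- The quantized mutual information `C(W)` for channel `H`, combiner `W`,
SNR `ρ` and quantization gain `α` (with `β = 1 - α`):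
`C(W) = log₂ det( I + (α/β)·(diag{WᴴHHᴴW} + (1/(βρ))I)⁻¹ · WᴴHHᴴW )`. -/
noncomputable def MI (ρ α : ℝ) {Nr Nu NRF : ℕ} (H : Matrix (Fin Nr) (Fin Nu) ℂ)
    (W : Matrix (Fin Nr) (Fin NRF) ℂ) : ℝ :=
  let A : Matrix (Fin NRF) (Fin NRF) ℂ := Wᴴ * H * Hᴴ * W
  let M : Matrix (Fin NRF) (Fin NRF) ℂ :=
    1 + ((α / (1 - α) : ℝ) : ℂ) •
      ((Matrix.diagonal A.diag + ((1 / ((1 - α) * ρ) : ℝ) : ℂ) • 1)⁻¹ * A)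
  Real.logb 2 M.det.re

/-- Reindex a sum over `Fin NRF` to a sum over `Fin Nu` when terms beyond `Nu` vanish. -/
lemma sum_castLE {M : Type*} [AddCommMonoid M] {Nu NRF : ℕ} (h1 : Nu ≤ NRF)
    (f : Fin NRF → M) (h0 : ∀ k : Fin NRF, Nu ≤ (k : ℕ) → f k = 0) :
    ∑ k, f k = ∑ m : Fin Nu, f (Fin.castLE h1 m) := by
  classical
  have hm := Finset.sum_map Finset.univ ⟨Fin.castLE h1, Fin.castLE_injective h1⟩ f
  simp only [Function.Embedding.coeFn_mk] at hm
  rw [← hm]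
  refine (Finset.sum_subset (Finset.subset_univ _) ?_).symm
  intro x _ hx
  refine h0 x (le_of_not_gt fun hlt => hx ?_)
  simp only [Finset.mem_map, Finset.mem_univ, Function.Embedding.coeFn_mk]
  exact ⟨⟨(x : ℕ), hlt⟩, trivial, by ext; rfl⟩

/-- Reindex a product over `Fin NRF` to a product over `Fin Nu` when terms beyond `Nu`
are one. -/
lemma prod_castLE {M : Type*} [CommMonoid M] {Nu NRF : ℕ} (h1 : Nu ≤ NRF)
    (f : Fin NRF → M) (h0 : ∀ k : Fin NRF, Nu ≤ (k : ℕ) → f k = 1) :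
    ∏ k, f k = ∏ m : Fin Nu, f (Fin.castLE h1 m) := by
  classical
  have hm := Finset.prod_map Finset.univ ⟨Fin.castLE h1, Fin.castLE_injective h1⟩ f
  simp only [Function.Embedding.coeFn_mk] at hm
  rw [← hm]
  refine (Finset.prod_subset (Finset.subset_univ _) ?_).symm
  intro x _ hx
  refine h0 x (le_of_not_gt fun hlt => hx ?_)
  simp only [Finset.mem_map, Finset.mem_univ, Function.Embedding.coeFn_mk]
  exact ⟨⟨(x : ℕ), hlt⟩, trivial, by ext; rfl⟩

theorem stmt1 (ρ α : ℝ) (hρ : 0 < ρ) (hα : α ∈ Set.Ioo (0 : ℝ) 1)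
    (Nu NRF Nr : ℕ) (h1 : Nu ≤ NRF) (h2 : NRF ≤ Nr)
    (lam : ℝ) (hlam : 0 < lam)
    (H : Matrix (Fin Nr) (Fin Nu) ℂ)
    (hH : Hᴴ * H = (lam : ℂ) • 1)
    (W₁ : Matrix (Fin Nr) (Fin NRF) ℂ)
    (hW₁ : W₁ᴴ * W₁ = 1)
    (hspan : Submodule.span ℂ (Set.range fun k : Fin Nu => W₁ᵀ (Fin.castLE h1 k)) =
      LinearMap.range H.mulVecLin)
    (W₂ : Matrix (Fin NRF) (Fin NRF) ℂ)
    (hW₂ : W₂ ∈ Matrix.unitaryGroup (Fin NRF) ℂ)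
    (hmod : ∀ i j, ‖W₂ i j‖ = 1 / Real.sqrt NRF) :
    MI ρ α H (W₁ * W₂) =
      Nu * Real.logb 2 (1 + α * lam * NRF / (lam * Nu * (1 - α) + NRF / ρ)) := by
  obtain ⟨hα0, hα1⟩ := hα
  have hβ : (0:ℝ) < 1 - α := by linarith
  -- trivial case NRF = 0
  rcases Nat.eq_zero_or_pos NRF with hN0 | hNpos
  · subst hN0
    have hNu : Nu = 0 := Nat.le_zero.mp h1
    subst hNu
    simp [MI, Matrix.det_fin_zero]
  have hNR : (0:ℝ) < NRF := by exact_mod_cast hNpos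
  -- columns of H lie in the span of the first Nu columns of W₁
  have hcol : ∀ j : Fin Nu, (fun i => H i j) ∈
      Submodule.span ℂ (Set.range fun k : Fin Nu => W₁ᵀ (Fin.castLE h1 k)) := by
    intro j
    rw [hspan]
    refine ⟨Pi.single j 1, ?_⟩
    funext i
    simp [Matrix.mulVecLin_apply]
  set B : Matrix (Fin NRF) (Fin Nu) ℂ := W₁ᴴ * H with hBdef
  -- projection fact : W₁ W₁ᴴ H = H
  have hW₁' : W₁ * W₁ᴴ * W₁ = W₁ := by rw [Matrix.mul_assoc, hW₁, Matrix.mul_one]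
  have hPvec : ∀ v ∈ Submodule.span ℂ (Set.range fun k : Fin Nu => W₁ᵀ (Fin.castLE h1 k)),
      (W₁ * W₁ᴴ) *ᵥ v = v := by
    intro v hv
    induction hv using Submodule.span_induction with
    | mem x hx =>
      obtain ⟨k, rfl⟩ := hx
      show (W₁ * W₁ᴴ) *ᵥ W₁ᵀ (Fin.castLE h1 k) = W₁ᵀ (Fin.castLE h1 k)
      have hgen : (fun i => W₁ i (Fin.castLE h1 k)) = W₁ *ᵥ Pi.single (Fin.castLE h1 k) 1 := by
        funext i; simp [Matrix.mulVec_single]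
      have : W₁ᵀ (Fin.castLE h1 k) = fun i => W₁ i (Fin.castLE h1 k) := rfl
      rw [this, hgen, Matrix.mulVec_mulVec, hW₁']
    | zero => simp [Matrix.mulVec_zero]
    | add x y hx hy ihx ihy => rw [Matrix.mulVec_add, ihx, ihy]
    | smul a x hx ih => rw [Matrix.mulVec_smul, ih]
  have hPH : W₁ * W₁ᴴ * H = H := by
    ext i j
    have h := congrFun (hPvec _ (hcol j)) i
    simpa [Matrix.mulVec, Matrix.mul_apply, dotProduct] using h
  -- rows of B = W₁ᴴ H beyond Nu vanish
  have hrow0 : ∀ (k : Fin NRF), Nu ≤ (k : ℕ) → ∀ j, B k j = 0 := by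
    intro k hk j
    have hvan : ∀ v ∈ Submodule.span ℂ (Set.range fun m : Fin Nu => W₁ᵀ (Fin.castLE h1 m)),
        (W₁ᴴ *ᵥ v) k = 0 := by
      intro v hv
      induction hv using Submodule.span_induction with
      | mem x hx =>
        obtain ⟨m, rfl⟩ := hx
        show (W₁ᴴ *ᵥ W₁ᵀ (Fin.castLE h1 m)) k = 0
        have hgen : W₁ᵀ (Fin.castLE h1 m) = W₁ *ᵥ Pi.single (Fin.castLE h1 m) 1 := by
          funext i; simp [Matrix.mulVec_single]
        rw [hgen, Matrix.mulVec_mulVec, hW₁]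
        have hne : k ≠ Fin.castLE h1 m := by
          intro h
          have hm := m.isLt
          have hkv : (k : ℕ) = (m : ℕ) := by rw [h]; rfl
          omega
        simp only [Matrix.one_mulVec, Matrix.mulVec_single, mul_one]
        simp [Matrix.one_apply_ne hne, Pi.single_eq_of_ne hne]
      | zero => simp [Matrix.mulVec_zero]
      | add x y hx hy ihx ihy => simp [Matrix.mulVec_add, ihx, ihy]
      | smul a x hx ih => simp [Matrix.mulVec_smul, ih]
    have h := hvan _ (hcol j)
    simpa [Matrix.mulVec, Matrix.mul_apply, dotProduct, hBdef] using h
  -- Gram identities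
  have hBB : Bᴴ * B = (lam : ℂ) • 1 := by
    rw [hBdef, Matrix.conjTranspose_mul, Matrix.conjTranspose_conjTranspose,
      Matrix.mul_assoc, ← Matrix.mul_assoc W₁, hPH, hH]
  set B₀ : Matrix (Fin Nu) (Fin Nu) ℂ := B.submatrix (Fin.castLE h1) id with hB₀def
  have hB₀ : B₀ᴴ * B₀ = (lam : ℂ) • 1 := by
    ext a b
    have e := congrFun (congrFun hBB a) b
    rw [Matrix.mul_apply] at e
    rw [Matrix.mul_apply]
    rw [sum_castLE h1 (fun k => Bᴴ a k * B k b)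
      (fun k hk => by
        show Bᴴ a k * B k b = 0
        simp only [Matrix.conjTranspose_apply, hrow0 k hk a, star_zero, zero_mul])] at e
    simpa [hB₀def, Matrix.conjTranspose_apply, Matrix.submatrix_apply] using e
  have hlam0 : (lam : ℂ) ≠ 0 := by
    simpa using Complex.ofReal_ne_zero.mpr hlam.ne'
  have hB₀' : B₀ * B₀ᴴ = (lam : ℂ) • 1 := by
    have h2' : (((lam : ℂ)⁻¹) • B₀ᴴ) * B₀ = 1 := by
      rw [Matrix.smul_mul, hB₀, smul_smul, inv_mul_cancel₀ hlam0, one_smul]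
    have h3' := mul_eq_one_comm.mp h2'
    calc B₀ * B₀ᴴ = (lam : ℂ) • (B₀ * (((lam : ℂ)⁻¹) • B₀ᴴ)) := by
          rw [Matrix.mul_smul, smul_smul, mul_inv_cancel₀ hlam0, one_smul]
      _ = (lam : ℂ) • 1 := by rw [h3']
  -- the key diagonal form of B Bᴴ
  have hQ : B * Bᴴ =
      Matrix.diagonal (fun i : Fin NRF => if (i : ℕ) < Nu then (lam : ℂ) else 0) := by
    ext i j
    rw [Matrix.mul_apply, Matrix.diagonal_apply]
    simp only [Matrix.conjTranspose_apply]
    by_cases hi : (i : ℕ) < Nu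
    · by_cases hj : (j : ℕ) < Nu
      · have e := congrFun (congrFun hB₀' ⟨(i : ℕ), hi⟩) ⟨(j : ℕ), hj⟩
        rw [Matrix.mul_apply] at e
        simp only [hB₀def, Matrix.conjTranspose_apply, Matrix.submatrix_apply, id] at e
        have hci : Fin.castLE h1 ⟨(i : ℕ), hi⟩ = i := rfl
        have hcj : Fin.castLE h1 ⟨(j : ℕ), hj⟩ = j := rfl
        rw [hci, hcj] at e
        rw [e]
        by_cases hij : i = j
        · subst hij; simp [Matrix.one_apply, if_pos hi]
        · have hne : (⟨(i : ℕ), hi⟩ : Fin Nu) ≠ ⟨(j : ℕ), hj⟩ := fun h =>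
            hij (Fin.ext (by simpa [Fin.mk.injEq] using h))
          simp [Matrix.one_apply, hne, hij]
      · have hz : ∀ m : Fin Nu, B i m * (starRingEnd ℂ) (B j m) = 0 := fun m => by
          rw [hrow0 j (le_of_not_gt hj) m]; simp
        have hij : i ≠ j := fun h => hj (h ▸ hi)
        simp [hz, hij]
    · have hz : ∀ m : Fin Nu, B i m * (starRingEnd ℂ) (B j m) = 0 := fun m => by
        rw [hrow0 i (le_of_not_gt hi) m]; simp
      simp [hz, if_neg hi]
  -- unitarity of W₂
  have hU : W₂ᴴ * W₂ = 1 := by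
    have h := Matrix.mem_unitaryGroup_iff'.mp hW₂
    simpa [Matrix.star_eq_conjTranspose] using h
  have hNne : (NRF : ℝ) ≠ 0 := hNR.ne'
  set d : Fin NRF → ℂ := fun i => if (i : ℕ) < Nu then (lam : ℂ) else 0 with hd
  set D : Matrix (Fin NRF) (Fin NRF) ℂ := Matrix.diagonal d with hD
  have hA : (W₁ * W₂)ᴴ * H * Hᴴ * (W₁ * W₂) = W₂ᴴ * D * W₂ := by
    rw [← hQ, hBdef]
    simp only [Matrix.conjTranspose_mul, Matrix.conjTranspose_conjTranspose, Matrix.mul_assoc]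
  set c₁ : ℝ := lam * Nu / NRF with hc1
  set c₂ : ℝ := 1 / ((1 - α) * ρ) with hc2
  have hc₁0 : (0:ℝ) ≤ c₁ := by rw [hc1]; positivity
  have hc₂0 : (0:ℝ) < c₂ := by rw [hc2]; positivity
  set s : ℝ := c₁ + c₂ with hsdef
  have hs : (0:ℝ) < s := by rw [hsdef]; linarith
  -- the diagonal of A is constant equal to c₁
  have hdiagA : (W₂ᴴ * D * W₂).diag = fun _ => ((c₁ : ℝ) : ℂ) := by
    funext j
    rw [Matrix.diag_apply, Matrix.mul_apply]
    have hterm : ∀ k : Fin NRF,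
        (W₂ᴴ * D) j k * W₂ k j = d k * ((1 / (NRF : ℝ) : ℝ) : ℂ) := by
      intro k
      rw [hD, Matrix.mul_diagonal, Matrix.conjTranspose_apply]
      have hz : W₂ k j * star (W₂ k j) = ((1 / (NRF : ℝ) : ℝ) : ℂ) := by
        rw [Complex.star_def, Complex.mul_conj, Complex.normSq_eq_norm_sq, hmod,
          div_pow, one_pow, Real.sq_sqrt hNR.le]
      calc star (W₂ k j) * d k * W₂ k j
          = d k * (W₂ k j * star (W₂ k j)) := by ring
        _ = d k * ((1 / (NRF : ℝ) : ℝ) : ℂ) := by rw [hz]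
    rw [Finset.sum_congr rfl fun k _ => hterm k, ← Finset.sum_mul]
    have hsd : (∑ k, d k) = (Nu : ℂ) * (lam : ℂ) := by
      rw [sum_castLE h1 d (fun k hk => by rw [hd]; simp [not_lt.mpr hk])]
      have : ∀ m : Fin Nu, d (Fin.castLE h1 m) = (lam : ℂ) := fun m => by
        rw [hd]; simp [m.isLt]
      rw [Finset.sum_congr rfl fun m _ => this m, Finset.sum_const, Finset.card_univ,
        Fintype.card_fin, nsmul_eq_mul]
    rw [hsd, hc1]
    push_cast
    ring
  have hdiag2 : Matrix.diagonal ((W₂ᴴ * D * W₂).diag) = ((c₁ : ℝ) : ℂ) • 1 := by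
    rw [hdiagA]
    ext i j
    by_cases hij : i = j <;>
      simp [Matrix.diagonal_apply, Matrix.one_apply, hij]
  have hsum1 : Matrix.diagonal ((W₂ᴴ * D * W₂).diag) + ((c₂ : ℝ) : ℂ) • 1 =
      ((s : ℝ) : ℂ) • (1 : Matrix (Fin NRF) (Fin NRF) ℂ) := by
    rw [hdiag2, ← add_smul, hsdef]
    push_cast
    rfl
  have hinv : (Matrix.diagonal ((W₂ᴴ * D * W₂).diag) + ((c₂ : ℝ) : ℂ) • 1)⁻¹ =
      ((s⁻¹ : ℝ) : ℂ) • (1 : Matrix (Fin NRF) (Fin NRF) ℂ) := by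
    rw [hsum1]
    apply Matrix.inv_eq_right_inv
    rw [Matrix.smul_mul, Matrix.one_mul, smul_smul, ← Complex.ofReal_mul,
      mul_inv_cancel₀ hs.ne', Complex.ofReal_one, one_smul]
  set t : ℝ := α / (1 - α) * s⁻¹ with ht
  have hM : (1 : Matrix (Fin NRF) (Fin NRF) ℂ) + ((α / (1 - α) : ℝ) : ℂ) •
        (((s⁻¹ : ℝ) : ℂ) • (1 : Matrix (Fin NRF) (Fin NRF) ℂ) * (W₂ᴴ * D * W₂)) =
      W₂ᴴ * (1 + ((t : ℝ) : ℂ) • D) * W₂ := by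
    rw [Matrix.mul_add, Matrix.mul_one, Matrix.add_mul, hU, Matrix.mul_smul, Matrix.smul_mul,
      Matrix.smul_mul, Matrix.one_mul, smul_smul, ← Complex.ofReal_mul, ht]
  have hdet : (W₂ᴴ * (1 + ((t : ℝ) : ℂ) • D) * W₂).det = ((1 + t * lam : ℝ) : ℂ) ^ Nu := by
    rw [Matrix.det_mul, Matrix.det_mul]
    have h4 : W₂ᴴ.det * W₂.det = 1 := by rw [← Matrix.det_mul, hU, Matrix.det_one]
    have h5 : (1 + ((t : ℝ) : ℂ) • D).det = ((1 + t * lam : ℝ) : ℂ) ^ Nu := by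
      rw [hD, ← Matrix.diagonal_one, ← Matrix.diagonal_smul, Matrix.diagonal_add,
        Matrix.det_diagonal]
      simp only [Pi.add_apply, Pi.smul_apply, Pi.one_apply, smul_eq_mul]
      have h7 : ∏ i : Fin NRF, (1 + ((t : ℝ) : ℂ) * d i) =
          ∏ m : Fin Nu, (1 + ((t : ℝ) : ℂ) * d (Fin.castLE h1 m)) :=
        prod_castLE h1 (fun i => 1 + ((t : ℝ) : ℂ) * d i)
          (fun k hk => by simp [hd, not_lt.mpr hk])
      rw [h7]
      have h6 : ∀ m : Fin Nu,
          1 + ((t : ℝ) : ℂ) * d (Fin.castLE h1 m) = ((1 + t * lam : ℝ) : ℂ) := by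
        intro m
        simp only [hd, Fin.coe_castLE, m.isLt, if_true]
        push_cast
        ring
      rw [Finset.prod_congr rfl fun m _ => h6 m, Finset.prod_const, Finset.card_univ,
        Fintype.card_fin]
    calc W₂ᴴ.det * (1 + ((t : ℝ) : ℂ) • D).det * W₂.det
        = W₂ᴴ.det * W₂.det * (1 + ((t : ℝ) : ℂ) • D).det := by ring
      _ = ((1 + t * lam : ℝ) : ℂ) ^ Nu := by rw [h4, one_mul, h5]
  have harg : 1 + t * lam = 1 + α * lam * NRF / (lam * Nu * (1 - α) + NRF / ρ) := by
    have hden : (0:ℝ) < lam * Nu * (1 - α) + (NRF : ℝ) / ρ := by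
      have h7 : (0:ℝ) ≤ lam * Nu * (1 - α) := by positivity
      have h8 : (0:ℝ) < (NRF : ℝ) / ρ := div_pos hNR hρ
      linarith
    have hs' : s ≠ 0 := hs.ne'
    rw [ht, hsdef, hc1, hc2] at *
    field_simp
  -- put everything together
  simp only [MI]
  rw [hA, hinv, hM, hdet, ← Complex.ofReal_pow, Complex.ofReal_re, Real.logb_pow, harg]
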